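/- Replacing the boundary-adjacent fourth-difference factor (W₃ − 3W₂ + 2W₁) by (W₃ − 2W₂ + W₁) restores the cancellation: the resulting adjoint combination −2(Λ₁−Λ₂)k̄⁴_{3/2}κ_{3/2} + 3(Λ₂−Λ₃)k̄⁴_{5/2}κ_{5/2} − (Λ₃−Λ₄)κ_{7/2}k̄⁴_{7/2} + (boundary contributions of order Δξ·κ dominated by O(1) boundary terms) differs from a telescoping third-order difference by terms of order O(Δξ²)·κ, hence is O(Δξ²)·κ; in particular for smooth Λ, κ, k̄⁴ the leading O(Δξ)·κ inconsistency vanishes. -/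

import Mathlib

open Filter Topology Asymptotics

/-- Auxiliary: a C² function vanishing to second order at 0 is `O(h²)` near 0. -/
lemma quadratic_isBigO (f : ℝ → ℝ) (hf : ContDiff ℝ 2 f) (h0 : f 0 = 0)
    (h1 : deriv f 0 = 0) : f =O[𝓝 0] (fun h : ℝ => h ^ 2) := by
  have hdiff : Differentiable ℝ f := hf.differentiable (by norm_num)
  have hd : ContDiff ℝ 1 (deriv f) := by
    have : ContDiff ℝ ((1 : ℕ) + 1) f := by exact_mod_cast hf
    exact (contDiff_succ_iff_deriv.mp this).2.2
  have hdat : ContDiffAt ℝ 1 (deriv f) 0 := hd.contDiffAt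
  obtain ⟨K, t, ht, hK⟩ := hdat.exists_lipschitzOnWith
  obtain ⟨ε, hε, hball⟩ := Metric.mem_nhds_iff.mp ht
  refine IsBigO.of_bound K ?_
  have hmem : Metric.ball (0 : ℝ) ε ∈ 𝓝 (0 : ℝ) := Metric.ball_mem_nhds _ hε
  filter_upwards [hmem] with h hh
  have hsub : Metric.closedBall (0 : ℝ) |h| ⊆ t := by
    intro x hx
    apply hball
    simp only [Metric.mem_closedBall, Real.dist_eq, sub_zero] at hx
    simp only [Metric.mem_ball, Real.dist_eq, sub_zero]
    have h2 : |h| < ε := by simpa [Real.dist_eq] using hh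
    linarith
  -- bound on the derivative on the closed ball
  have hbound : ∀ x ∈ Metric.closedBall (0 : ℝ) |h|, ‖deriv f x‖ ≤ K * |h| := by
    intro x hx
    have hx' : |x| ≤ |h| := by
      simpa [Metric.mem_closedBall, Real.dist_eq] using hx
    have := hK.norm_sub_le (hsub hx) (hsub (Metric.mem_closedBall_self (abs_nonneg h)))
    calc ‖deriv f x‖ = ‖deriv f x - deriv f 0‖ := by rw [h1, sub_zero]
      _ ≤ K * ‖x - 0‖ := this
      _ = K * |x| := by rw [sub_zero]; rfl
      _ ≤ K * |h| := by
          have : (0:ℝ) ≤ K := K.coe_nonneg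
          exact mul_le_mul_of_nonneg_left hx' this
  have hconv : Convex ℝ (Metric.closedBall (0 : ℝ) |h|) := convex_closedBall _ _
  have key := hconv.norm_image_sub_le_of_norm_deriv_le
    (fun x _ => hdiff.differentiableAt) hbound
    (Metric.mem_closedBall_self (abs_nonneg h))
    (by simp [Metric.mem_closedBall, Real.dist_eq] : h ∈ Metric.closedBall (0:ℝ) |h|)
  calc ‖f h‖ = ‖f h - f 0‖ := by rw [h0, sub_zero]
    _ ≤ K * |h| * ‖h - 0‖ := key
    _ = K * ‖h ^ 2‖ := by
        rw [sub_zero]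
        rw [Real.norm_eq_abs, Real.norm_eq_abs, abs_pow]
        ring

/- Adjoint consistency of the boundary flux F^{JST_b}_{3/2} (with dissipation factor
W₃ − 2W₂ + W₁): for smooth Λ, κ, k̄⁴ the penultimate-cell adjoint combination
−2(Λ₁−Λ₂)k̄⁴_{3/2}κ_{3/2} + 3(Λ₂−Λ₃)k̄⁴_{5/2}κ_{5/2} − (Λ₃−Λ₄)κ_{7/2}k̄⁴_{7/2}
is O(Δξ²): the leading O(Δξ) inconsistency vanishes. -/
theorem jst_adjoint_penultimate_consistency_modified
    (Λ : ℝ → Fin 4 → ℝ) (κ k4 : ℝ → ℝ)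
    (hΛ : ∀ i, ContDiff ℝ 4 (fun x => Λ x i))
    (hκ : ContDiff ℝ 3 κ) (hk4 : ContDiff ℝ 3 k4)
    (hκpos : ∀ x, 0 < κ x) (hk4pos : ∀ x, 0 < k4 x) (i : Fin 4) :
    (fun h : ℝ =>
        - 2 * (Λ (h/2) i - Λ (3*h/2) i) * (k4 h * κ h)
        + 3 * (Λ (3*h/2) i - Λ (5*h/2) i) * (k4 (2*h) * κ (2*h))
        - (Λ (5*h/2) i - Λ (7*h/2) i) * (κ (3*h) * k4 (3*h)))
      =O[𝓝 0] (fun h : ℝ => h ^ 2) := by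
  set L : ℝ → ℝ := fun x => Λ x i with hLdef
  have hL : ContDiff ℝ 4 L := hΛ i
  set f : ℝ → ℝ := fun h =>
        - 2 * (L (h/2) - L (3*h/2)) * (k4 h * κ h)
        + 3 * (L (3*h/2) - L (5*h/2)) * (k4 (2*h) * κ (2*h))
        - (L (5*h/2) - L (7*h/2)) * (κ (3*h) * k4 (3*h)) with hfdef
  have hLc : ∀ c : ℝ, ContDiff ℝ 2 (fun h : ℝ => L (c * h)) := fun c =>
    (hL.of_le (by norm_num)).comp (contDiff_const.mul contDiff_id)
  have hLc' : ∀ c : ℝ, ContDiff ℝ 2 (fun h : ℝ => L (c * h / 2)) := fun c =>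
    (hL.of_le (by norm_num)).comp ((contDiff_const.mul contDiff_id).div_const 2)
  have hk4c : ∀ c : ℝ, ContDiff ℝ 2 (fun h : ℝ => k4 (c * h)) := fun c =>
    (hk4.of_le (by norm_num)).comp (contDiff_const.mul contDiff_id)
  have hκc : ∀ c : ℝ, ContDiff ℝ 2 (fun h : ℝ => κ (c * h)) := fun c =>
    (hκ.of_le (by norm_num)).comp (contDiff_const.mul contDiff_id)
  have hf : ContDiff ℝ 2 f := by
    rw [hfdef]
    have h1 : ContDiff ℝ 2 (fun h : ℝ => L (h / 2)) := by
      have := hLc' 1; simpa using this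
    have k1 : ContDiff ℝ 2 (fun h : ℝ => k4 h) := by
      have := hk4c 1; simpa using this
    have q1 : ContDiff ℝ 2 (fun h : ℝ => κ h) := by
      have := hκc 1; simpa using this
    exact ((((contDiff_const.mul (h1.sub (hLc' 3))).mul
        (k1.mul q1)).add
      ((contDiff_const.mul ((hLc' 3).sub (hLc' 5))).mul
        ((hk4c 2).mul (hκc 2)))).sub
      (((hLc' 5).sub (hLc' 7)).mul ((hκc 3).mul (hk4c 3))))
  have hf0 : f 0 = 0 := by simp [hfdef]
  -- compute the derivative at 0
  have hLd : HasDerivAt L (deriv L 0) 0 :=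
    ((hL.differentiable (by norm_num)) 0).hasDerivAt
  set l := deriv L 0 with hl
  have hcomp : ∀ c : ℝ, HasDerivAt (fun h : ℝ => L (c * h / 2)) (l * (c / 2)) 0 := by
    intro c
    have hinner : HasDerivAt (fun h : ℝ => c * h / 2) (c / 2) 0 := by
      simpa using ((hasDerivAt_id (0:ℝ)).const_mul c).div_const 2
    have hLd0 : HasDerivAt L l (c * 0 / 2) := by simpa using hLd
    have := hLd0.comp 0 hinner
    exact this
  have hk4d : ∀ c : ℝ, HasDerivAt (fun h : ℝ => k4 (c * h)) (deriv k4 0 * c) 0 := by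
    intro c
    have houter : HasDerivAt k4 (deriv k4 0) (c * 0) := by
      simpa using ((hk4.differentiable (by norm_num)) 0).hasDerivAt
    have hinner : HasDerivAt (fun h : ℝ => c * h) c 0 := by
      simpa using (hasDerivAt_id (0:ℝ)).const_mul c
    have := houter.comp 0 hinner
    exact this
  have hκd : ∀ c : ℝ, HasDerivAt (fun h : ℝ => κ (c * h)) (deriv κ 0 * c) 0 := by
    intro c
    have houter : HasDerivAt κ (deriv κ 0) (c * 0) := by
      simpa using ((hκ.differentiable (by norm_num)) 0).hasDerivAt
    have hinner : HasDerivAt (fun h : ℝ => c * h) c 0 := by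
      simpa using (hasDerivAt_id (0:ℝ)).const_mul c
    have := houter.comp 0 hinner
    exact this
  have hfd : HasDerivAt f
      ((-2 * (l * (1/2) - l * (3/2))) * (k4 0 * κ 0)
        + (3 * (l * (3/2) - l * (5/2))) * (k4 0 * κ 0)
        - (l * (5/2) - l * (7/2)) * (κ 0 * k4 0)) 0 := by
    have e1 : HasDerivAt (fun h : ℝ => L (h / 2)) (l * (1/2)) 0 := by
      have := hcomp 1; simpa using this
    have t1 : HasDerivAt (fun h : ℝ => -2 * (L (h/2) - L (3*h/2)) * (k4 h * κ h))
        ((-2 * (l * (1/2) - l * (3/2))) * (k4 0 * κ 0)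
          + (-2 * (L 0 - L 0)) * ((deriv k4 0 * 1) * κ 0 + k4 0 * (deriv κ 0 * 1))) 0 := by
      have hdiff : HasDerivAt (fun h : ℝ => -2 * (L (h/2) - L (3*h/2)))
          (-2 * (l * (1/2) - l * (3/2))) 0 := ((e1.sub (hcomp 3)).const_mul (-2))
      have hka : HasDerivAt (fun h : ℝ => k4 h * κ h)
          ((deriv k4 0 * 1) * κ 0 + k4 0 * (deriv κ 0 * 1)) 0 := by
        have a := hk4d 1; have b := hκd 1
        simp only [one_mul] at a b
        exact a.mul b
      have := hdiff.fun_mul hka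
      simpa [mul_comm] using this
    have t2 : HasDerivAt (fun h : ℝ => 3 * (L (3*h/2) - L (5*h/2)) * (k4 (2*h) * κ (2*h)))
        ((3 * (l * (3/2) - l * (5/2))) * (k4 0 * κ 0)
          + (3 * (L 0 - L 0)) * ((deriv k4 0 * 2) * κ 0 + k4 0 * (deriv κ 0 * 2))) 0 := by
      have hdiff : HasDerivAt (fun h : ℝ => 3 * (L (3*h/2) - L (5*h/2)))
          (3 * (l * (3/2) - l * (5/2))) 0 := ((hcomp 3).sub (hcomp 5)).const_mul 3
      have hka : HasDerivAt (fun h : ℝ => k4 (2*h) * κ (2*h))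
          ((deriv k4 0 * 2) * κ 0 + k4 0 * (deriv κ 0 * 2)) 0 := by
        have a := hk4d 2; have b := hκd 2
        have := a.fun_mul b
        simpa using this
      have := hdiff.fun_mul hka
      simpa [mul_comm] using this
    have t3 : HasDerivAt (fun h : ℝ => (L (5*h/2) - L (7*h/2)) * (κ (3*h) * k4 (3*h)))
        ((l * (5/2) - l * (7/2)) * (κ 0 * k4 0)
          + (L 0 - L 0) * ((deriv κ 0 * 3) * k4 0 + κ 0 * (deriv k4 0 * 3))) 0 := by
      have hdiff : HasDerivAt (fun h : ℝ => L (5*h/2) - L (7*h/2))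
          (l * (5/2) - l * (7/2)) 0 := (hcomp 5).sub (hcomp 7)
      have hka : HasDerivAt (fun h : ℝ => κ (3*h) * k4 (3*h))
          ((deriv κ 0 * 3) * k4 0 + κ 0 * (deriv k4 0 * 3)) 0 := by
        have a := hκd 3; have b := hk4d 3
        have := a.fun_mul b
        simpa using this
      have := hdiff.fun_mul hka
      simpa [mul_comm] using this
    have := (t1.fun_add t2).fun_sub t3
    rw [hfdef]
    refine this.congr_deriv ?_
    ring
  have hderiv0 : deriv f 0 = 0 := by
    rw [hfd.deriv]; ring
  exact quadratic_isBigO f hf hf0 hderiv0
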